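/- With the same hypotheses as in the product-AGSP lemma (for each t ∈ {1,…,n}: K_t Hermitian with ‖K_t‖ ≤ 1, Π_t an orthogonal projector, Γ_t, Δ_t ∈ [0,1], ε_t ≥ 0, K_tΠ_t = Π_tK_t, K_tΠ_t ≥ √Γ_t·Π_t, ‖(I−Π_t)K_t(I−Π_t)‖ ≤ √Δ_t, ‖Π_t − Π₀‖ ≤ ε_t; ρ a density matrix; K := K_n⋯K_1), set a := tr(ρΠ₀)·∏_{t=1}^n Γ_t − 2∑_{t=1}^n ε_t ∏_{s=t+1}^n Γ_s and b := tr(ρ(I−Π₀))·∏_{t=1}^n Δ_t + 2∑_{t=1}^n ε_t ∏_{s=t+1}^n Δ_s. If a > 0, then tr(K ρ K†) > 0 and the normalized state ρ_n := K ρ K† / tr(K ρ K†) satisfies tr(Π₀ ρ_n) ≥ 1 − b/a. -/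

import Mathlib

open scoped Matrix Matrix.Norms.L2Operator ComplexOrder

namespace Stmt13Aux

variable {D : ℕ}

noncomputable def ee : (Fin D → ℂ) ≃ EuclideanSpace ℂ (Fin D) := (WithLp.equiv 2 (Fin D → ℂ)).symm

lemma dot_self_eq (x : Fin D → ℂ) : star x ⬝ᵥ x = ((‖ee x‖^2 : ℝ) : ℂ) := by
  have := inner_self_eq_norm_sq_to_K (𝕜 := ℂ) (ee x)
  rw [EuclideanSpace.inner_eq_star_dotProduct] at this
  rw [dotProduct_comm]
  simpa [ee] using this

lemma dot_mulVec_abs_le (A : Matrix (Fin D) (Fin D) ℂ) (x : Fin D → ℂ) :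
    ‖star x ⬝ᵥ (A *ᵥ x)‖ ≤ ‖A‖ * ‖ee x‖ ^ 2 := by
  have h1 : star x ⬝ᵥ (A *ᵥ x) = inner ℂ (ee x) (ee (A *ᵥ x)) := by
    rw [EuclideanSpace.inner_eq_star_dotProduct, dotProduct_comm]; rfl
  rw [h1]
  calc ‖inner ℂ (ee x) (ee (A *ᵥ x))‖ ≤ ‖ee x‖ * ‖ee (A *ᵥ x)‖ := by
        simpa using norm_inner_le_norm (𝕜 := ℂ) (ee x) (ee (A *ᵥ x))
    _ ≤ ‖ee x‖ * (‖A‖ * ‖ee x‖) := by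
        have := Matrix.l2_opNorm_mulVec A (ee x)
        exact mul_le_mul_of_nonneg_left (by simpa [ee] using this) (norm_nonneg _)
    _ = ‖A‖ * ‖ee x‖ ^ 2 := by ring

lemma quad_star_eq {A : Matrix (Fin D) (Fin D) ℂ} (hA : A.IsHermitian) (x : Fin D → ℂ) :
    star (star x ⬝ᵥ (A *ᵥ x)) = star x ⬝ᵥ (A *ᵥ x) := by
  rw [← Matrix.star_dotProduct_star, star_star, Matrix.star_mulVec, hA.eq,
    Matrix.dotProduct_mulVec]

/-- `c • 1 - A` is PSD for Hermitian `A` with `‖A‖ ≤ c`. -/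
lemma smul_one_sub_posSemidef {A : Matrix (Fin D) (Fin D) ℂ} (hA : A.IsHermitian)
    {c : ℝ} (hc : ‖A‖ ≤ c) : ((c : ℂ) • 1 - A).PosSemidef := by
  have hherm : ((c : ℂ) • 1 - A).IsHermitian := by
    simp only [Matrix.IsHermitian, Matrix.conjTranspose_sub, Matrix.conjTranspose_smul,
      Matrix.conjTranspose_one, hA.eq, Complex.star_def, Complex.conj_ofReal]
  refine Matrix.PosSemidef.of_dotProduct_mulVec_nonneg hherm fun x => ?_
  have hre : ((c : ℂ) • (1 : Matrix (Fin D) (Fin D) ℂ) - A) = (c : ℂ) • 1 - A := rfl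
  have hq : star x ⬝ᵥ (((c : ℂ) • 1 - A) *ᵥ x)
      = (c : ℂ) * (star x ⬝ᵥ x) - star x ⬝ᵥ (A *ᵥ x) := by
    rw [Matrix.sub_mulVec, dotProduct_sub, Matrix.smul_mulVec,
      Matrix.one_mulVec, dotProduct_smul, smul_eq_mul]
  rw [hq, dot_self_eq]
  have hstar := quad_star_eq hA x
  set z := star x ⬝ᵥ (A *ᵥ x) with hz
  have him : z.im = 0 := by
    have := congrArg Complex.im hstar
    simp only [Complex.star_def, Complex.conj_im] at this
    linarith
  have hrele : z.re ≤ c * ‖ee x‖ ^ 2 := by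
    calc z.re ≤ ‖z‖ := Complex.re_le_norm z
      _ ≤ ‖A‖ * ‖ee x‖ ^ 2 := dot_mulVec_abs_le A x
      _ ≤ c * ‖ee x‖ ^ 2 := by nlinarith [sq_nonneg ‖ee (D := D) x‖, norm_nonneg A]
  have heq : (c : ℂ) * ((‖ee x‖^2 : ℝ) : ℂ) - z = ((c * ‖ee x‖^2 - z.re : ℝ) : ℂ) := by
    apply Complex.ext <;> simp [him]
  rw [heq]
  rw [Complex.zero_le_real]
  linarith

lemma trace_re_nonneg {M : Matrix (Fin D) (Fin D) ℂ} (hM : M.PosSemidef) :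
    0 ≤ M.trace.re := by
  have h : ∀ i, 0 ≤ (M i i).re := by
    intro i
    have := hM.dotProduct_mulVec_nonneg (Pi.single i 1)
    rw [Complex.le_def] at this
    simpa [dotProduct, Matrix.mulVec, Pi.single_apply] using this.1
  rw [Matrix.trace]
  rw [Complex.re_sum]
  exact Finset.sum_nonneg fun i _ => h i

open MatrixOrder in
lemma trace_mul_re_nonneg {A B : Matrix (Fin D) (Fin D) ℂ}
    (hA : A.PosSemidef) (hB : B.PosSemidef) : 0 ≤ (A * B).trace.re := by
  obtain ⟨C, rfl⟩ := CStarAlgebra.nonneg_iff_eq_star_mul_self.mp hA.nonneg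
  rw [Matrix.star_eq_conjTranspose]
  rw [(Matrix.trace_mul_cycle C B Cᴴ).symm]
  exact trace_re_nonneg (hB.mul_mul_conjTranspose_same C)

/-- trace bound: `|tr(Aσ).re| ≤ c · tr σ` for Hermitian `A`, `‖A‖ ≤ c`, σ PSD. -/
lemma abs_trace_mul_le {A σ : Matrix (Fin D) (Fin D) ℂ} (hA : A.IsHermitian)
    (hσ : σ.PosSemidef) {c : ℝ} (hc : ‖A‖ ≤ c) :
    |((A * σ).trace.re)| ≤ c * σ.trace.re := by
  have h1 : 0 ≤ ((((c:ℂ) • 1 - A)) * σ).trace.re :=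
    trace_mul_re_nonneg (smul_one_sub_posSemidef hA hc) hσ
  have h2 : 0 ≤ ((((c:ℂ) • 1 + A)) * σ).trace.re := by
    rw [← sub_neg_eq_add]
    refine trace_mul_re_nonneg (smul_one_sub_posSemidef ?_ ?_) hσ
    · exact hA.neg
    · simpa using hc
  have e1 : ((((c:ℂ) • 1 - A)) * σ).trace.re = c * σ.trace.re - (A * σ).trace.re := by
    rw [Matrix.sub_mul, Matrix.trace_sub, Matrix.smul_mul, Matrix.one_mul, Matrix.trace_smul]
    simp [Complex.smul_re]
  have e2 : ((((c:ℂ) • 1 + A)) * σ).trace.re = c * σ.trace.re + (A * σ).trace.re := by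
    rw [Matrix.add_mul, Matrix.trace_add, Matrix.smul_mul, Matrix.one_mul, Matrix.trace_smul]
    simp [Complex.smul_re]
  rw [e1] at h1; rw [e2] at h2
  rw [abs_le]; constructor <;> linarith


lemma proj_posSemidef {Q : Matrix (Fin D) (Fin D) ℂ} (hQ : Q.IsHermitian)
    (hQ2 : Q * Q = Q) : Q.PosSemidef := by
  have : Q = Qᴴ * Q := by rw [hQ.eq, hQ2]
  rw [this]
  exact Matrix.posSemidef_conjTranspose_mul_self Q

lemma trace_conj_le {K σ : Matrix (Fin D) (Fin D) ℂ} (hK : ‖K‖ ≤ 1)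
    (hσ : σ.PosSemidef) : (K * σ * Kᴴ).trace.re ≤ σ.trace.re := by
  rw [Matrix.trace_mul_cycle K σ Kᴴ]
  have hherm : (Kᴴ * K).IsHermitian := Matrix.isHermitian_conjTranspose_mul_self K
  have hnorm : ‖Kᴴ * K‖ ≤ 1 := by
    rw [Matrix.l2_opNorm_conjTranspose_mul_self]
    nlinarith [norm_nonneg K]
  have h := abs_trace_mul_le hherm hσ hnorm
  rw [abs_le] at h
  have h0 := trace_re_nonneg hσ
  rw [one_mul] at h
  linarith [h.2]

lemma trace_proj_close {A B σ : Matrix (Fin D) (Fin D) ℂ} (hA : A.IsHermitian)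
    (hB : B.IsHermitian) (hσ : σ.PosSemidef) (hσtr : σ.trace.re ≤ 1)
    {ε : ℝ} (hε : 0 ≤ ε) (hAB : ‖A - B‖ ≤ ε) :
    |(A * σ).trace.re - (B * σ).trace.re| ≤ ε := by
  have h := abs_trace_mul_le (hA.sub hB) hσ hAB
  rw [Matrix.sub_mul, Matrix.trace_sub] at h
  have h2 : ε * σ.trace.re ≤ ε :=
    le_trans (mul_le_mul_of_nonneg_left hσtr hε) (by linarith)
  calc |(A * σ).trace.re - (B * σ).trace.re| = |((A*σ).trace - (B*σ).trace).re| := by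
        rw [Complex.sub_re]
    _ ≤ ε * σ.trace.re := h
    _ ≤ ε := h2

lemma dot_sq_self {M : Matrix (Fin D) (Fin D) ℂ} (hM : M.IsHermitian) (x : Fin D → ℂ) :
    star x ⬝ᵥ ((M * M) *ᵥ x) = ((‖ee (M *ᵥ x)‖^2 : ℝ) : ℂ) := by
  rw [← Matrix.mulVec_mulVec, Matrix.dotProduct_mulVec]
  have h1 : star x ᵥ* M = star (M *ᵥ x) := by
    rw [Matrix.star_mulVec, hM.eq]
  rw [h1, dot_self_eq]

lemma dot_proj_self {Q : Matrix (Fin D) (Fin D) ℂ} (hQ : Q.IsHermitian)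
    (hQ2 : Q * Q = Q) (x : Fin D → ℂ) :
    star x ⬝ᵥ (Q *ᵥ x) = ((‖ee (Q *ᵥ x)‖^2 : ℝ) : ℂ) := by
  calc star x ⬝ᵥ (Q *ᵥ x) = star x ⬝ᵥ ((Q * Q) *ᵥ x) := by rw [hQ2]
    _ = ((‖ee (Q *ᵥ x)‖^2 : ℝ) : ℂ) := dot_sq_self hQ x

lemma vecnorm_mul_le (M : Matrix (Fin D) (Fin D) ℂ) (v : Fin D → ℂ) :
    ‖ee (M *ᵥ v)‖ ≤ ‖M‖ * ‖ee v‖ := by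
  simpa [ee] using Matrix.l2_opNorm_mulVec M (ee v)

/-- `c² • Q - M²` is PSD when `M` Hermitian with support in the projector `Q`, `‖M‖ ≤ c`. -/
lemma sq_le_proj {M Q : Matrix (Fin D) (Fin D) ℂ} (hM : M.IsHermitian)
    (hQ : Q.IsHermitian) (hQ2 : Q * Q = Q) (hMQ : M * Q = M)
    {c : ℝ} (hc : ‖M‖ ≤ c) :
    (((c^2 : ℝ) : ℂ) • Q - M * M).PosSemidef := by
  refine Matrix.PosSemidef.of_dotProduct_mulVec_nonneg ?_ ?_
  · simp only [Matrix.IsHermitian, Matrix.conjTranspose_sub, Matrix.conjTranspose_smul,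
      Matrix.conjTranspose_mul, hQ.eq, hM.eq, Complex.star_def, Complex.conj_ofReal]
  · intro x
    have hquad : star x ⬝ᵥ ((((c^2 : ℝ) : ℂ) • Q - M * M) *ᵥ x)
        = ((c^2 : ℝ) : ℂ) * (star x ⬝ᵥ (Q *ᵥ x)) - star x ⬝ᵥ ((M * M) *ᵥ x) := by
      rw [Matrix.sub_mulVec, dotProduct_sub, Matrix.smul_mulVec,
        dotProduct_smul, smul_eq_mul]
    have hineq : ‖ee (M *ᵥ x)‖ ≤ c * ‖ee (Q *ᵥ x)‖ := by
      have h1 : M *ᵥ x = M *ᵥ (Q *ᵥ x) := by rw [Matrix.mulVec_mulVec, hMQ]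
      rw [h1]
      calc ‖ee (M *ᵥ (Q *ᵥ x))‖ ≤ ‖M‖ * ‖ee (Q *ᵥ x)‖ := vecnorm_mul_le M _
        _ ≤ c * ‖ee (Q *ᵥ x)‖ := by
            have := norm_nonneg (ee (D := D) (Q *ᵥ x)); nlinarith
    rw [hquad, dot_proj_self hQ hQ2, dot_sq_self hM]
    have heq : ((c^2 : ℝ) : ℂ) * ((‖ee (Q *ᵥ x)‖^2 : ℝ) : ℂ) - ((‖ee (M *ᵥ x)‖^2 : ℝ) : ℂ)
        = ((c^2 * ‖ee (Q *ᵥ x)‖^2 - ‖ee (M *ᵥ x)‖^2 : ℝ) : ℂ) := by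
      push_cast; ring
    rw [heq, Complex.zero_le_real]
    nlinarith [norm_nonneg (ee (D := D) (M *ᵥ x)), norm_nonneg (ee (D := D) (Q *ᵥ x)),
      norm_nonneg M, le_trans (norm_nonneg M) hc]

/-- Key Γ-step: `tr(P (K σ K)).re ≥ Γ tr(P σ).re`. -/
lemma gamma_step {K Pr σ : Matrix (Fin D) (Fin D) ℂ}
    (hPr : Pr.IsHermitian) (hPr2 : Pr * Pr = Pr) (hcomm : K * Pr = Pr * K)
    {Γ : ℝ} (hΓ0 : 0 ≤ Γ)
    (hGamma : (K * Pr - (Real.sqrt Γ : ℂ) • Pr).PosSemidef)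
    (hσ : σ.PosSemidef) :
    Γ * (Pr * σ).trace.re ≤ (Pr * (K * σ * K)).trace.re := by
  set c : ℝ := Real.sqrt Γ with hc
  set A : Matrix (Fin D) (Fin D) ℂ := K * Pr - (c : ℂ) • Pr with hA
  have hXeq : K * Pr = A + (c : ℂ) • Pr := by rw [hA, sub_add_cancel]
  have hAPr : A * Pr = A := by
    rw [hA, Matrix.sub_mul, Matrix.mul_assoc, hPr2, Matrix.smul_mul, hPr2]
  have hPrA : Pr * A = A := by
    rw [hA, Matrix.mul_sub, Matrix.mul_smul, hPr2, ← Matrix.mul_assoc, ← hcomm,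
      Matrix.mul_assoc, hPr2]
  have htr : (Pr * (K * σ * K)).trace = ((K * Pr) * σ * (K * Pr)).trace := by
    have h1 : Pr * (K * σ * K) = ((Pr * K) * σ) * K := by
      simp only [Matrix.mul_assoc]
    have hXX : (K * Pr) * (K * Pr) = K * ((Pr * K) * Pr) := by
      simp only [Matrix.mul_assoc]
    have h2 : K * ((Pr * K) * σ) = ((K * Pr) * (K * Pr)) * σ := by
      rw [hXX]
      have : (Pr * K) * Pr = Pr * K := by
        rw [← hcomm, Matrix.mul_assoc, hPr2]
      rw [this]
      simp only [Matrix.mul_assoc]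
    rw [h1, Matrix.trace_mul_comm, h2, ← Matrix.trace_mul_cycle (K * Pr) σ (K * Pr)]
  rw [htr, hXeq]
  have hexp : (A + (c : ℂ) • Pr) * σ * (A + (c : ℂ) • Pr)
      = A * σ * A + (c : ℂ) • (A * σ * Pr) + (c : ℂ) • (Pr * σ * A)
      + ((c : ℂ) * (c : ℂ)) • (Pr * σ * Pr) := by
    simp only [Matrix.add_mul, Matrix.mul_add, Matrix.smul_mul, Matrix.mul_smul, smul_smul,
      smul_add]
    abel
  have hAherm : A.IsHermitian := hGamma.isHermitian
  have t1 : 0 ≤ (A * σ * A).trace.re := by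
    have h : A * σ * A = A * σ * Aᴴ := by rw [hAherm.eq]
    rw [h]
    exact trace_re_nonneg (hσ.mul_mul_conjTranspose_same A)
  have t2 : 0 ≤ (A * σ * Pr).trace.re := by
    rw [Matrix.trace_mul_cycle A σ Pr, hPrA]
    exact trace_mul_re_nonneg hGamma hσ
  have t3 : 0 ≤ (Pr * σ * A).trace.re := by
    rw [Matrix.trace_mul_cycle Pr σ A, hAPr]
    exact trace_mul_re_nonneg hGamma hσ
  have t4 : (Pr * σ * Pr).trace = (Pr * σ).trace := by
    rw [Matrix.trace_mul_cycle Pr σ Pr, hPr2]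
  have hcsq : c * c = Γ := Real.mul_self_sqrt hΓ0
  have hc0 : 0 ≤ c := Real.sqrt_nonneg _
  rw [hexp]
  simp only [Matrix.trace_add, Matrix.trace_smul, Complex.add_re, smul_eq_mul,
    Complex.mul_re, Complex.mul_im, Complex.ofReal_re, Complex.ofReal_im, t4,
    mul_zero, zero_mul, sub_zero, zero_sub, add_zero, zero_add, neg_zero]
  rw [← hcsq]
  nlinarith [t1, mul_nonneg hc0 t2, mul_nonneg hc0 t3]

/-- Key Δ-step: `tr(Q (K σ K)).re ≤ Δ tr(Q σ).re`. -/
lemma delta_step {K Q σ : Matrix (Fin D) (Fin D) ℂ} (hK : K.IsHermitian)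
    (hQ : Q.IsHermitian) (hQ2 : Q * Q = Q) (hcomm : K * Q = Q * K)
    {Δ : ℝ} (hΔ0 : 0 ≤ Δ)
    (hDelta : ‖Q * K * Q‖ ≤ Real.sqrt Δ)
    (hσ : σ.PosSemidef) :
    (Q * (K * σ * K)).trace.re ≤ Δ * (Q * σ).trace.re := by
  have hMQK : Q * K * Q = Q * K := by
    rw [Matrix.mul_assoc, ← hcomm, ← Matrix.mul_assoc, ← hcomm, Matrix.mul_assoc, hQ2, hcomm]
  have hMherm : (Q * K).IsHermitian := by
    rw [Matrix.IsHermitian, Matrix.conjTranspose_mul, hK.eq, hQ.eq, hcomm]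
  have hMnorm : ‖Q * K‖ ≤ Real.sqrt Δ := by rw [← hMQK]; exact hDelta
  have hMQ : (Q * K) * Q = Q * K := hMQK
  have hpsd : ((((Real.sqrt Δ)^2 : ℝ) : ℂ) • Q - (Q * K) * (Q * K)).PosSemidef :=
    sq_le_proj hMherm hQ hQ2 hMQ hMnorm
  have htr : (Q * (K * σ * K)).trace = (((Q * K) * (Q * K)) * σ).trace := by
    have h1 : Q * (K * σ * K) = ((Q * K) * σ) * K := by simp only [Matrix.mul_assoc]
    have h2 : K * ((Q * K) * σ) = ((Q * K) * (Q * K)) * σ := by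
      have h3 : (Q * K) * (Q * K) = K * (Q * K) := by
        calc (Q * K) * (Q * K) = (Q * K * Q) * K := by simp only [Matrix.mul_assoc]
          _ = (Q * K) * K := by rw [hMQK]
          _ = (K * Q) * K := by rw [hcomm]
          _ = K * (Q * K) := by simp only [Matrix.mul_assoc]
      rw [h3]
      simp only [Matrix.mul_assoc]
    rw [h1, Matrix.trace_mul_comm, h2]
  rw [htr]
  have h3 : 0 ≤ (((((Real.sqrt Δ)^2 : ℝ) : ℂ) • Q - (Q * K) * (Q * K)) * σ).trace.re :=
    trace_mul_re_nonneg hpsd hσ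
  rw [Matrix.sub_mul, Matrix.trace_sub, Matrix.smul_mul, Matrix.trace_smul] at h3
  have hcsq : (Real.sqrt Δ)^2 = Δ := Real.sq_sqrt hΔ0
  simp only [Complex.sub_re, smul_eq_mul, Complex.mul_re, Complex.ofReal_re,
    Complex.ofReal_im, hcsq] at h3
  linarith


noncomputable def Lmat (K : ℕ → Matrix (Fin D) (Fin D) ℂ) (t : ℕ) : Matrix (Fin D) (Fin D) ℂ :=
  ((List.ofFn fun i : Fin t => K i).reverse).prod

lemma Lmat_zero (K : ℕ → Matrix (Fin D) (Fin D) ℂ) : Lmat K 0 = 1 := by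
  simp [Lmat]

lemma Lmat_succ (K : ℕ → Matrix (Fin D) (Fin D) ℂ) (t : ℕ) :
    Lmat K (t + 1) = K t * Lmat K t := by
  rw [Lmat, Lmat, List.ofFn_succ', List.concat_eq_append, List.reverse_append]
  simp [Fin.last]


lemma main_ind {n : ℕ}
    (K P : ℕ → Matrix (Fin D) (Fin D) ℂ)
    (P₀ : Matrix (Fin D) (Fin D) ℂ)
    (Γ Δ ε : ℕ → ℝ)
    (hP₀herm : P₀.IsHermitian) (hP₀proj : P₀ * P₀ = P₀)
    (hKherm : ∀ t ∈ Finset.range n, (K t).IsHermitian)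
    (hKnorm : ∀ t ∈ Finset.range n, ‖K t‖ ≤ 1)
    (hPherm : ∀ t ∈ Finset.range n, (P t).IsHermitian)
    (hPproj : ∀ t ∈ Finset.range n, P t * P t = P t)
    (hΓ : ∀ t ∈ Finset.range n, Γ t ∈ Set.Icc (0 : ℝ) 1)
    (hΔ : ∀ t ∈ Finset.range n, Δ t ∈ Set.Icc (0 : ℝ) 1)
    (hε : ∀ t ∈ Finset.range n, 0 ≤ ε t)
    (hcomm : ∀ t ∈ Finset.range n, K t * P t = P t * K t)
    (hGamma : ∀ t ∈ Finset.range n, (K t * P t - (Real.sqrt (Γ t) : ℂ) • P t).PosSemidef)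
    (hDelta : ∀ t ∈ Finset.range n, ‖(1 - P t) * K t * (1 - P t)‖ ≤ Real.sqrt (Δ t))
    (hPP₀ : ∀ t ∈ Finset.range n, ‖P t - P₀‖ ≤ ε t)
    (ρ : Matrix (Fin D) (Fin D) ℂ) (hρ : ρ.PosSemidef) (hρtr : ρ.trace = 1) :
    ∀ t, t ≤ n →
      ((Lmat K t * ρ * (Lmat K t)ᴴ).PosSemidef ∧ (Lmat K t * ρ * (Lmat K t)ᴴ).trace.re ≤ 1) ∧
      ((ρ * P₀).trace.re * (∏ s ∈ Finset.range t, Γ s) -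
          2 * ∑ s ∈ Finset.range t, ε s * ∏ u ∈ Finset.Ico (s + 1) t, Γ u
        ≤ (P₀ * (Lmat K t * ρ * (Lmat K t)ᴴ)).trace.re) ∧
      (((1 - P₀) * (Lmat K t * ρ * (Lmat K t)ᴴ)).trace.re
        ≤ (ρ * (1 - P₀)).trace.re * (∏ s ∈ Finset.range t, Δ s) +
          2 * ∑ s ∈ Finset.range t, ε s * ∏ u ∈ Finset.Ico (s + 1) t, Δ u) := by
  intro t
  induction t with
  | zero =>
    intro _
    rw [Lmat_zero]
    simp only [Matrix.conjTranspose_one, Matrix.one_mul, Matrix.mul_one, Finset.range_zero,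
      Finset.prod_empty, Finset.sum_empty, mul_one, mul_zero, sub_zero, add_zero]
    refine ⟨⟨hρ, by rw [hρtr]; norm_num⟩, ?_, ?_⟩
    · rw [Matrix.trace_mul_comm]
    · rw [Matrix.trace_mul_comm]
  | succ t ih =>
    intro ht
    have ht' : t ≤ n := Nat.le_of_succ_le ht
    have htm : t ∈ Finset.range n := Finset.mem_range.mpr ht
    obtain ⟨⟨hpsd, htr1⟩, hf, hg⟩ := ih ht'
    set σ : Matrix (Fin D) (Fin D) ℂ := Lmat K t * ρ * (Lmat K t)ᴴ with hσdef
    have hσsucc : Lmat K (t+1) * ρ * (Lmat K (t+1))ᴴ = K t * σ * (K t)ᴴ := by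
      rw [Lmat_succ, Matrix.conjTranspose_mul, hσdef]
      simp only [Matrix.mul_assoc]
    have hσsucc' : Lmat K (t+1) * ρ * (Lmat K (t+1))ᴴ = K t * σ * K t := by
      rw [hσsucc, (hKherm t htm).eq]
    set σ' : Matrix (Fin D) (Fin D) ℂ := K t * σ * K t with hσ'def
    have hσ'psd : σ'.PosSemidef := by
      have h := hpsd.mul_mul_conjTranspose_same (K t)
      rw [(hKherm t htm).eq] at h
      exact h
    have hσ'tr : σ'.trace.re ≤ 1 := by
      have h := trace_conj_le (hKnorm t htm) hpsd
      rw [(hKherm t htm).eq] at h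
      exact le_trans h htr1
    rw [hσsucc']
    have hQ₀herm : ((1 : Matrix (Fin D) (Fin D) ℂ) - P₀).IsHermitian := by
      simpa using Matrix.isHermitian_one.sub hP₀herm
    have hQherm : ((1 : Matrix (Fin D) (Fin D) ℂ) - P t).IsHermitian := by
      simpa using Matrix.isHermitian_one.sub (hPherm t htm)
    have hQproj : ((1 : Matrix (Fin D) (Fin D) ℂ) - P t) * (1 - P t) = 1 - P t := by
      rw [Matrix.mul_sub, Matrix.sub_mul, Matrix.sub_mul, hPproj t htm]
      simp only [Matrix.one_mul, Matrix.mul_one]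
      abel
    have hQcomm : K t * (1 - P t) = (1 - P t) * K t := by
      rw [Matrix.mul_sub, Matrix.sub_mul, hcomm t htm]
      simp only [Matrix.one_mul, Matrix.mul_one]
    have hQdiff : (1 - P t) - (1 - P₀) = P₀ - P t := sub_sub_sub_cancel_left _ _ 1
    have hQnorm : ‖((1 : Matrix (Fin D) (Fin D) ℂ) - P t) - (1 - P₀)‖ ≤ ε t := by
      rw [hQdiff, ← norm_neg, neg_sub]
      exact hPP₀ t htm
    constructor
    · exact ⟨hσ'psd, hσ'tr⟩
    have hΓ0 := (hΓ t htm).1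
    have hΓ1 := (hΓ t htm).2
    have hΔ0 := (hΔ t htm).1
    have hΔ1 := (hΔ t htm).2
    have hε0 := hε t htm
    constructor
    · -- Γ part
      have h1 : |(P t * σ').trace.re - (P₀ * σ').trace.re| ≤ ε t :=
        trace_proj_close (hPherm t htm) hP₀herm hσ'psd hσ'tr hε0 (hPP₀ t htm)
      have h2 : Γ t * (P t * σ).trace.re ≤ (P t * σ').trace.re := by
        rw [hσ'def]
        exact gamma_step (hPherm t htm) (hPproj t htm) (hcomm t htm) hΓ0
          (hGamma t htm) hpsd
      have h3 : |(P t * σ).trace.re - (P₀ * σ).trace.re| ≤ ε t :=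
        trace_proj_close (hPherm t htm) hP₀herm hpsd htr1 hε0 (hPP₀ t htm)
      rw [abs_le] at h1 h3
      have hstep : Γ t * (P₀ * σ).trace.re - 2 * ε t ≤ (P₀ * σ').trace.re := by
        nlinarith [h1.1, h1.2, h3.1, h3.2]
      have hform : (ρ * P₀).trace.re * (∏ s ∈ Finset.range (t+1), Γ s) -
          2 * ∑ s ∈ Finset.range (t+1), ε s * ∏ u ∈ Finset.Ico (s + 1) (t+1), Γ u
          = Γ t * ((ρ * P₀).trace.re * (∏ s ∈ Finset.range t, Γ s) -
            2 * ∑ s ∈ Finset.range t, ε s * ∏ u ∈ Finset.Ico (s + 1) t, Γ u) - 2 * ε t := by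
        rw [Finset.prod_range_succ, Finset.sum_range_succ, Finset.Ico_self,
          Finset.prod_empty]
        rw [show (∑ s ∈ Finset.range t, ε s * ∏ u ∈ Finset.Ico (s + 1) (t+1), Γ u)
            = ∑ s ∈ Finset.range t, Γ t * (ε s * ∏ u ∈ Finset.Ico (s + 1) t, Γ u) from
          Finset.sum_congr rfl fun s hs => by
            rw [Finset.prod_Ico_succ_top (Finset.mem_range.mp hs)]; ring]
        rw [← Finset.mul_sum]
        ring
      rw [hform]
      have := mul_le_mul_of_nonneg_left hf hΓ0
      linarith
    · -- Δ part
      have h1 : |((1 - P t) * σ').trace.re - ((1 - P₀) * σ').trace.re| ≤ ε t :=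
        trace_proj_close hQherm hQ₀herm hσ'psd hσ'tr hε0 hQnorm
      have h2 : ((1 - P t) * σ').trace.re ≤ Δ t * ((1 - P t) * σ).trace.re := by
        rw [hσ'def]
        exact delta_step (hKherm t htm) hQherm hQproj hQcomm hΔ0 (hDelta t htm) hpsd
      have h3 : |((1 - P t) * σ).trace.re - ((1 - P₀) * σ).trace.re| ≤ ε t :=
        trace_proj_close hQherm hQ₀herm hpsd htr1 hε0 hQnorm
      rw [abs_le] at h1 h3
      have hstep : ((1 - P₀) * σ').trace.re ≤ Δ t * ((1 - P₀) * σ).trace.re + 2 * ε t := by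
        nlinarith [h1.1, h1.2, h3.1, h3.2]
      have hform : (ρ * (1 - P₀)).trace.re * (∏ s ∈ Finset.range (t+1), Δ s) +
          2 * ∑ s ∈ Finset.range (t+1), ε s * ∏ u ∈ Finset.Ico (s + 1) (t+1), Δ u
          = Δ t * ((ρ * (1 - P₀)).trace.re * (∏ s ∈ Finset.range t, Δ s) +
            2 * ∑ s ∈ Finset.range t, ε s * ∏ u ∈ Finset.Ico (s + 1) t, Δ u) + 2 * ε t := by
        rw [Finset.prod_range_succ, Finset.sum_range_succ, Finset.Ico_self,
          Finset.prod_empty]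
        rw [show (∑ s ∈ Finset.range t, ε s * ∏ u ∈ Finset.Ico (s + 1) (t+1), Δ u)
            = ∑ s ∈ Finset.range t, Δ t * (ε s * ∏ u ∈ Finset.Ico (s + 1) t, Δ u) from
          Finset.sum_congr rfl fun s hs => by
            rw [Finset.prod_Ico_succ_top (Finset.mem_range.mp hs)]; ring]
        rw [← Finset.mul_sum]
        ring
      rw [hform]
      have := mul_le_mul_of_nonneg_left hg hΔ0
      linarith

end Stmt13Aux



open Stmt13Aux in
/-- Normalized-overlap bound for the product of time-dependent AGSPs: if
`a := tr(ρΠ₀)·∏Γ_t − 2∑ε_t∏_{s>t}Γ_s > 0` then the normalized state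
`KρK†/tr(KρK†)` has ground-space overlap at least `1 − b/a`. -/
theorem stmt13 (D : ℕ) (hD : 1 ≤ D) (n : ℕ) (hn : 1 ≤ n)
    (K P : ℕ → Matrix (Fin D) (Fin D) ℂ)
    (P₀ : Matrix (Fin D) (Fin D) ℂ)
    (Γ Δ ε : ℕ → ℝ)
    (hP₀herm : P₀.IsHermitian) (hP₀proj : P₀ * P₀ = P₀)
    (hKherm : ∀ t ∈ Finset.range n, (K t).IsHermitian)
    (hKnorm : ∀ t ∈ Finset.range n, ‖K t‖ ≤ 1)
    (hPherm : ∀ t ∈ Finset.range n, (P t).IsHermitian)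
    (hPproj : ∀ t ∈ Finset.range n, P t * P t = P t)
    (hΓ : ∀ t ∈ Finset.range n, Γ t ∈ Set.Icc (0 : ℝ) 1)
    (hΔ : ∀ t ∈ Finset.range n, Δ t ∈ Set.Icc (0 : ℝ) 1)
    (hε : ∀ t ∈ Finset.range n, 0 ≤ ε t)
    (hcomm : ∀ t ∈ Finset.range n, K t * P t = P t * K t)
    (hGamma : ∀ t ∈ Finset.range n, (K t * P t - (Real.sqrt (Γ t) : ℂ) • P t).PosSemidef)
    (hDelta : ∀ t ∈ Finset.range n, ‖(1 - P t) * K t * (1 - P t)‖ ≤ Real.sqrt (Δ t))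
    (hPP₀ : ∀ t ∈ Finset.range n, ‖P t - P₀‖ ≤ ε t)
    (ρ : Matrix (Fin D) (Fin D) ℂ) (hρ : ρ.PosSemidef) (hρtr : ρ.trace = 1)
    (a b : ℝ)
    (ha : a = (ρ * P₀).trace.re * (∏ t ∈ Finset.range n, Γ t) -
        2 * ∑ t ∈ Finset.range n, ε t * ∏ s ∈ Finset.Ico (t + 1) n, Γ s)
    (hb : b = (ρ * (1 - P₀)).trace.re * (∏ t ∈ Finset.range n, Δ t) +
        2 * ∑ t ∈ Finset.range n, ε t * ∏ s ∈ Finset.Ico (t + 1) n, Δ s)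
    (hapos : 0 < a) :
    (let Kprod : Matrix (Fin D) (Fin D) ℂ := ((List.ofFn fun i : Fin n => K i).reverse).prod
     0 < (Kprod * ρ * Kprodᴴ).trace.re ∧
       1 - b / a ≤
         (P₀ * (((Kprod * ρ * Kprodᴴ).trace.re)⁻¹ • (Kprod * ρ * Kprodᴴ))).trace.re) := by
  intro Kprod
  have hKeq : Kprod = Lmat K n := rfl
  rw [hKeq]
  obtain ⟨⟨hpsd, htr1⟩, hf, hg⟩ := main_ind K P P₀ Γ Δ ε hP₀herm hP₀proj hKherm hKnorm
    hPherm hPproj hΓ hΔ hε hcomm hGamma hDelta hPP₀ ρ hρ hρtr n le_rfl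
  rw [← ha] at hf
  rw [← hb] at hg
  set σn : Matrix (Fin D) (Fin D) ℂ := Lmat K n * ρ * (Lmat K n)ᴴ with hσn
  set f : ℝ := (P₀ * σn).trace.re with hfdef
  set g : ℝ := ((1 - P₀) * σn).trace.re with hgdef
  have hQ₀herm : ((1 : Matrix (Fin D) (Fin D) ℂ) - P₀).IsHermitian := by
    simpa using Matrix.isHermitian_one.sub hP₀herm
  have hQ₀proj : ((1 : Matrix (Fin D) (Fin D) ℂ) - P₀) * (1 - P₀) = 1 - P₀ := by
    rw [Matrix.mul_sub, Matrix.sub_mul, Matrix.sub_mul, hP₀proj]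
    simp only [Matrix.one_mul, Matrix.mul_one]
    abel
  have g0 : 0 ≤ g := trace_mul_re_nonneg (proj_posSemidef hQ₀herm hQ₀proj) hpsd
  have hsum : f + g = σn.trace.re := by
    rw [hfdef, hgdef, ← Complex.add_re, ← Matrix.trace_add, ← Matrix.add_mul]
    congr 2
    simp
  have hT0 : 0 < σn.trace.re := by
    rw [← hsum]; linarith
  refine ⟨hT0, ?_⟩
  rw [Matrix.mul_smul, Matrix.trace_smul, Complex.real_smul, Complex.mul_re]
  simp only [Complex.ofReal_re, Complex.ofReal_im, zero_mul, sub_zero]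
  rw [← hfdef, ← div_eq_inv_mul, le_div_iff₀ hT0]
  have hba : 0 ≤ b / a := div_nonneg (le_trans g0 hg) hapos.le
  have hq : (b / a) * a = b := div_mul_cancel₀ b (ne_of_gt hapos)
  have haT : a ≤ σn.trace.re := by rw [← hsum]; linarith
  have hint := mul_le_mul_of_nonneg_left haT hba
  have expand : (1 - b / a) * σn.trace.re = σn.trace.re - (b / a) * σn.trace.re := by ring
  rw [expand]
  linarith [hsum, hg]
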